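/- Let A be a Banach algebra that is (n+2)-weakly amenable, i.e., H^1(A, A^{(n+2)}) = {0}. Then A is n-weakly amenable, i.e., H^1(A, A^{(n)}) = {0}. -/
import Mathlib


open ContinuousLinearMap Filter Topology

namespace Paper

structure Bimod (A : Type*) [NormedRing A] [NormedAlgebra ℂ A]
    (X : Type*) [NormedAddCommGroup X] [NormedSpace ℂ X] where
  l : A → X →L[ℂ] X
  r : A → X →L[ℂ] X
  l_mul : ∀ a b x, l (a * b) x = l a (l b x)
  r_mul : ∀ a b x, r (a * b) x = r b (r a x)
  lr : ∀ a b x, l a (r b x) = r b (l a x)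

variable {A : Type*} [NormedRing A] [NormedAlgebra ℂ A]
variable {X : Type*} [NormedAddCommGroup X] [NormedSpace ℂ X]

noncomputable def Bimod.dual (M : Bimod A X) : Bimod A (X →L[ℂ] ℂ) where
  l a := (compL ℂ X X ℂ).flip (M.r a)
  r a := (compL ℂ X X ℂ).flip (M.l a)
  l_mul a b f := by ext x; simp [M.r_mul]
  r_mul a b f := by ext x; simp [M.l_mul]
  lr a b f := by ext x; simp [M.lr]

def IsDerivation (M : Bimod A X) (D : A →L[ℂ] X) : Prop :=
  ∀ a b, D (a * b) = M.l a (D b) + M.r b (D a)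

def IsInner (M : Bimod A X) (D : A →L[ℂ] X) : Prop :=
  ∃ x, ∀ a, D a = M.l a x - M.r a x

noncomputable def Bimod.restrict (M : Bimod A X) (Y : Submodule ℂ X)
    (hl : ∀ a, ∀ y ∈ Y, M.l a y ∈ Y) (hr : ∀ a, ∀ y ∈ Y, M.r a y ∈ Y) :
    Bimod A Y where
  l a := ((M.l a).comp Y.subtypeL).codRestrict Y fun y => hl a y y.2
  r a := ((M.r a).comp Y.subtypeL).codRestrict Y fun y => hr a y y.2
  l_mul a b y := Subtype.ext (M.l_mul a b y)
  r_mul a b y := Subtype.ext (M.r_mul a b y)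
  lr a b y := Subtype.ext (M.lr a b y)

noncomputable def algBimod (A : Type*) [NormedRing A] [NormedAlgebra ℂ A] : Bimod A A where
  l a := ContinuousLinearMap.mul ℂ A a
  r a := (ContinuousLinearMap.mul ℂ A).flip a
  l_mul a b x := mul_assoc a b x
  r_mul a b x := (mul_assoc x a b).symm
  lr a b x := (mul_assoc a x b).symm

noncomputable def idealBimod (I : Submodule ℂ A)
    (hL : ∀ a, ∀ x ∈ I, a * x ∈ I) (hR : ∀ a, ∀ x ∈ I, x * a ∈ I) :
    Bimod A I where
  l a := ((ContinuousLinearMap.mul ℂ A a).comp I.subtypeL).codRestrict I fun x => hL a x x.2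
  r a := (((ContinuousLinearMap.mul ℂ A).flip a).comp I.subtypeL).codRestrict I fun x => hR a x x.2
  l_mul a b x := Subtype.ext (mul_assoc a b (x : A))
  r_mul a b x := Subtype.ext (mul_assoc (x : A) a b).symm
  lr a b x := Subtype.ext (mul_assoc a (x : A) b).symm

structure BBM (A : Type*) [NormedRing A] [NormedAlgebra ℂ A] where
  carrier : Type*
  [grp : NormedAddCommGroup carrier]
  [mod : NormedSpace ℂ carrier]
  bimod : Bimod A carrier

attribute [instance] BBM.grp BBM.mod

noncomputable def BBM.dual {A : Type*} [NormedRing A] [NormedAlgebra ℂ A]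
    (M : BBM A) : BBM A :=
  { carrier := M.carrier →L[ℂ] ℂ
    bimod := M.bimod.dual }

/-- The Banach algebra $A$ as a Banach $A$-bimodule over itself. -/
noncomputable def algBBM (A : Type*) [NormedRing A] [NormedAlgebra ℂ A] : BBM A :=
  { carrier := A
    bimod := algBimod A }


set_option synthInstance.maxHeartbeats 1000000
set_option maxHeartbeats 1000000

noncomputable local instance fixNACG (E : Type*) [NormedAddCommGroup E] [NormedSpace ℂ E] :
    NormedAddCommGroup (E →L[ℂ] ℂ) := ContinuousLinearMap.toNormedAddCommGroup

noncomputable local instance fixNS (E : Type*) [NormedAddCommGroup E] [NormedSpace ℂ E] :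
    NormedSpace ℂ (E →L[ℂ] ℂ) := ContinuousLinearMap.toNormedSpace

section Aux

noncomputable def iot (Y : Type*) [NormedAddCommGroup Y] [NormedSpace ℂ Y] :
    Y →L[ℂ] ((Y →L[ℂ] ℂ) →L[ℂ] ℂ) := ContinuousLinearMap.apply ℂ ℂ

@[simp] lemma iot_apply {Y : Type*} [NormedAddCommGroup Y] [NormedSpace ℂ Y]
    (y : Y) (f : Y →L[ℂ] ℂ) : iot Y y f = f y := rfl

variable {Y : Type*} [NormedAddCommGroup Y] [NormedSpace ℂ Y]

lemma iot_l (N : Bimod A Y) (a : A) (y : Y) :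
    N.dual.dual.l a (iot Y y) = iot Y (N.l a y) := by
  ext f; simp [Bimod.dual, iot]

lemma iot_r (N : Bimod A Y) (a : A) (y : Y) :
    N.dual.dual.r a (iot Y y) = iot Y (N.r a y) := by
  ext f; simp [Bimod.dual, iot]

noncomputable def proj (Y : Type*) [NormedAddCommGroup Y] [NormedSpace ℂ Y] :
    ((((Y →L[ℂ] ℂ) →L[ℂ] ℂ) →L[ℂ] ℂ) →L[ℂ] (Y →L[ℂ] ℂ)) :=
  (compL ℂ Y ((Y →L[ℂ] ℂ) →L[ℂ] ℂ) ℂ).flip (iot Y)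

@[simp] lemma proj_apply (Φ : ((Y →L[ℂ] ℂ) →L[ℂ] ℂ) →L[ℂ] ℂ) (y : Y) :
    proj Y Φ y = Φ (iot Y y) := rfl

lemma proj_iot (x : Y →L[ℂ] ℂ) : proj Y (iot (Y →L[ℂ] ℂ) x) = x := by
  ext y; rfl

lemma proj_l (N : Bimod A Y) (a : A) (Φ : ((Y →L[ℂ] ℂ) →L[ℂ] ℂ) →L[ℂ] ℂ) :
    proj Y (N.dual.dual.dual.l a Φ) = N.dual.l a (proj Y Φ) := by
  ext y
  show Φ (N.dual.dual.r a (iot Y y)) = Φ (iot Y (N.r a y))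
  rw [iot_r]

lemma proj_r (N : Bimod A Y) (a : A) (Φ : ((Y →L[ℂ] ℂ) →L[ℂ] ℂ) →L[ℂ] ℂ) :
    proj Y (N.dual.dual.dual.r a Φ) = N.dual.r a (proj Y Φ) := by
  ext y
  show Φ (N.dual.dual.l a (iot Y y)) = Φ (iot Y (N.l a y))
  rw [iot_l]

lemma key (N : Bimod A Y)
    (h : ∀ D : A →L[ℂ] (((Y →L[ℂ] ℂ) →L[ℂ] ℂ) →L[ℂ] ℂ),
        IsDerivation N.dual.dual.dual D → IsInner N.dual.dual.dual D) :
    ∀ D : A →L[ℂ] (Y →L[ℂ] ℂ), IsDerivation N.dual D → IsInner N.dual D := by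
  intro D hD
  obtain ⟨Φ, hΦ⟩ := h ((iot (Y →L[ℂ] ℂ)).comp D) (fun a b => by
    simp only [ContinuousLinearMap.comp_apply, hD a b, map_add,
      ← iot_l N.dual, ← iot_r N.dual])
  refine ⟨proj Y Φ, fun a => ?_⟩
  have h2 := congrArg (proj Y) (hΦ a)
  simp only [ContinuousLinearMap.comp_apply, map_sub, proj_l, proj_r, proj_iot] at h2
  exact h2

end Aux

theorem stmt_4
    {A : Type*} [NormedRing A] [NormedAlgebra ℂ A] [CompleteSpace A]
    (n : ℕ) (hn : 1 ≤ n)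
    (h : ∀ D : A →L[ℂ] (BBM.dual^[n + 2] (algBBM A)).carrier,
        IsDerivation (BBM.dual^[n + 2] (algBBM A)).bimod D →
        IsInner (BBM.dual^[n + 2] (algBBM A)).bimod D) :
    ∀ D : A →L[ℂ] (BBM.dual^[n] (algBBM A)).carrier,
      IsDerivation (BBM.dual^[n] (algBBM A)).bimod D →
      IsInner (BBM.dual^[n] (algBBM A)).bimod D := by
  obtain ⟨m, rfl⟩ : ∃ m, n = m + 1 := ⟨n - 1, (Nat.succ_pred_eq_of_pos hn).symm⟩
  have e1 : BBM.dual^[m + 1] (algBBM A) = BBM.dual (BBM.dual^[m] (algBBM A)) :=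
    Function.iterate_succ_apply' _ _ _
  have e3 : BBM.dual^[m + 1 + 2] (algBBM A)
      = BBM.dual (BBM.dual (BBM.dual (BBM.dual^[m] (algBBM A)))) := by
    rw [show m + 1 + 2 = ((m + 1) + 1) + 1 by ring, Function.iterate_succ_apply',
      Function.iterate_succ_apply', Function.iterate_succ_apply', ← e1]
  rw [e3] at h
  rw [e1]
  exact key (BBM.dual^[m] (algBBM A)).bimod h

end Paper
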